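/- If λ = m e^{jφ} with β m cos φ > 1, then |βλ/(1 - βλ)| > 1; moreover |βλ/(1-βλ)|² is nonincreasing in m > 0 and nonincreasing in φ ∈ [0, φ̄] (where β m cos φ̄ > 1), so |βλ/(1-βλ)| ≥ β m̄ / sqrt(β² m̄² - 2β m̄ cos φ̄ + 1) for m ≤ m̄ and φ ≤ φ̄. -/

import Mathlib

open Real

lemma aux_pos16 (a c : ℝ) (ha : 0 < a) (hc1 : c ≤ 1) (h : 1 < a * c) :
    0 < a ^ 2 - 2 * a * c + 1 := by
  have ha1 : 1 < a := by nlinarith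
  nlinarith [mul_pos (sub_pos.2 ha1) (sub_pos.2 ha1),
    mul_nonneg ha.le (sub_nonneg.2 hc1)]

lemma mono_m16 (c a₁ a₂ : ℝ) (hc1 : c ≤ 1) (h1 : 0 < a₁) (h12 : a₁ ≤ a₂)
    (h : 1 < a₁ * c) :
    a₂ ^ 2 / (a₂ ^ 2 - 2 * a₂ * c + 1) ≤ a₁ ^ 2 / (a₁ ^ 2 - 2 * a₁ * c + 1) := by
  have hc0 : 0 < c := by nlinarith
  have h2 : 1 < a₂ * c := by nlinarith
  have ha2 : 0 < a₂ := lt_of_lt_of_le h1 h12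
  have d1 := aux_pos16 a₁ c h1 hc1 h
  have d2 := aux_pos16 a₂ c ha2 hc1 h2
  rw [div_le_div_iff₀ d2 d1]
  have key : 0 ≤ (a₂ - a₁) * (a₁ * (a₂ * c - 1) + a₂ * (a₁ * c - 1)) :=
    mul_nonneg (by linarith) (by nlinarith)
  nlinarith [key]

lemma mono_c16 (a c₁ c₂ : ℝ) (ha : 0 < a) (hc1 : c₁ ≤ 1) (h21 : c₂ ≤ c₁)
    (h : 1 < a * c₂) :
    a ^ 2 / (a ^ 2 - 2 * a * c₂ + 1) ≤ a ^ 2 / (a ^ 2 - 2 * a * c₁ + 1) := by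
  have d1 : 0 < a ^ 2 - 2 * a * c₁ + 1 :=
    aux_pos16 a c₁ ha hc1 (by nlinarith)
  apply div_le_div_of_nonneg_left (sq_nonneg a) d1
  nlinarith

theorem stmt_16 (β m mbar φ φbar : ℝ) (hβ : 0 < β) (hm : 0 < m)
    (hmbar : m ≤ mbar) (hφ0 : 0 ≤ φ) (hφ : φ ≤ φbar) (hφbar : φbar < π / 2)
    (hc : 1 < β * m * Real.cos φ) (hcbar : 1 < β * mbar * Real.cos φbar)
    (lam : ℂ) (hlam : lam = (m : ℂ) * Complex.exp ((φ : ℂ) * Complex.I)) :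
    (1 < ‖(β : ℂ) * lam / (1 - (β : ℂ) * lam)‖) ∧
    (∀ m₁ m₂ : ℝ, 0 < m₁ → m₁ ≤ m₂ → 1 < β * m₁ * Real.cos φ →
      β ^ 2 * m₂ ^ 2 / (β ^ 2 * m₂ ^ 2 - 2 * β * m₂ * Real.cos φ + 1)
        ≤ β ^ 2 * m₁ ^ 2 / (β ^ 2 * m₁ ^ 2 - 2 * β * m₁ * Real.cos φ + 1)) ∧
    (∀ φ₁ φ₂ : ℝ, 0 ≤ φ₁ → φ₁ ≤ φ₂ → φ₂ ≤ φbar → 1 < β * m * Real.cos φ₂ →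
      β ^ 2 * m ^ 2 / (β ^ 2 * m ^ 2 - 2 * β * m * Real.cos φ₂ + 1)
        ≤ β ^ 2 * m ^ 2 / (β ^ 2 * m ^ 2 - 2 * β * m * Real.cos φ₁ + 1)) ∧
    (β * mbar / Real.sqrt (β ^ 2 * mbar ^ 2 - 2 * β * mbar * Real.cos φbar + 1)
      ≤ ‖(β : ℂ) * lam / (1 - (β : ℂ) * lam)‖) := by
  have hmbar0 : 0 < mbar := lt_of_lt_of_le hm hmbar
  have hcosφ1 : Real.cos φ ≤ 1 := Real.cos_le_one φ
  set A := ‖(β : ℂ) * lam / (1 - (β : ℂ) * lam)‖ with hA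
  set D : ℝ := β ^ 2 * m ^ 2 - 2 * β * m * Real.cos φ + 1 with hDdef
  have hD : 0 < D := by
    have := aux_pos16 (β * m) (Real.cos φ) (mul_pos hβ hm) hcosφ1 hc
    rw [hDdef]; nlinarith
  -- compute normSq of denominator
  have hden : Complex.normSq (1 - (β : ℂ) * lam) = D := by
    rw [hlam]
    simp [Complex.normSq_apply, Complex.exp_ofReal_mul_I_re, Complex.exp_ofReal_mul_I_im,
      Complex.sub_re, Complex.sub_im, Complex.mul_re, Complex.mul_im, Complex.ofReal_re,
      Complex.ofReal_im, hDdef]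
    nlinarith [Real.sin_sq_add_cos_sq φ]
  have hnum : Complex.normSq ((β : ℂ) * lam) = β ^ 2 * m ^ 2 := by
    rw [hlam]
    simp [Complex.normSq_mul, Complex.normSq_eq_norm_sq, Complex.norm_exp_ofReal_mul_I]
    rw [abs_of_pos hβ, abs_of_pos hm]
    try ring
  have hA2 : A ^ 2 = β ^ 2 * m ^ 2 / D := by
    rw [hA, norm_div, div_pow, Complex.sq_norm, Complex.sq_norm, hden, hnum]
  have hA0 : 0 ≤ A := norm_nonneg _
  have h1lt : 1 < A ^ 2 := by
    rw [hA2, lt_div_iff₀ hD, hDdef]; nlinarith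
  refine ⟨?_, ?_, ?_, ?_⟩
  · exact lt_of_pow_lt_pow_left₀ 2 hA0 (by simpa using h1lt)
  · intro m₁ m₂ hm₁ h12 hc₁
    have := mono_m16 (Real.cos φ) (β * m₁) (β * m₂) hcosφ1 (mul_pos hβ hm₁)
      (by nlinarith) (by nlinarith)
    calc β ^ 2 * m₂ ^ 2 / (β ^ 2 * m₂ ^ 2 - 2 * β * m₂ * Real.cos φ + 1)
        = (β * m₂) ^ 2 / ((β * m₂) ^ 2 - 2 * (β * m₂) * Real.cos φ + 1) := by ring
      _ ≤ (β * m₁) ^ 2 / ((β * m₁) ^ 2 - 2 * (β * m₁) * Real.cos φ + 1) := this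
      _ = β ^ 2 * m₁ ^ 2 / (β ^ 2 * m₁ ^ 2 - 2 * β * m₁ * Real.cos φ + 1) := by ring
  · intro φ₁ φ₂ h0 h12 h2bar hc₂
    have hφ2π : φ₂ ≤ π := le_trans h2bar (by linarith [Real.pi_pos])
    have hcc : Real.cos φ₂ ≤ Real.cos φ₁ :=
      Real.cos_le_cos_of_nonneg_of_le_pi h0 hφ2π h12
    have hc11 : Real.cos φ₁ ≤ 1 := Real.cos_le_one φ₁
    have := mono_c16 (β * m) (Real.cos φ₁) (Real.cos φ₂) (mul_pos hβ hm) hc11 hcc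
      (by nlinarith)
    calc β ^ 2 * m ^ 2 / (β ^ 2 * m ^ 2 - 2 * β * m * Real.cos φ₂ + 1)
        = (β * m) ^ 2 / ((β * m) ^ 2 - 2 * (β * m) * Real.cos φ₂ + 1) := by ring
      _ ≤ (β * m) ^ 2 / ((β * m) ^ 2 - 2 * (β * m) * Real.cos φ₁ + 1) := this
      _ = β ^ 2 * m ^ 2 / (β ^ 2 * m ^ 2 - 2 * β * m * Real.cos φ₁ + 1) := by ring
  · set Dbar : ℝ := β ^ 2 * mbar ^ 2 - 2 * β * mbar * Real.cos φbar + 1 with hDbardef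
    have hcosbar1 : Real.cos φbar ≤ 1 := Real.cos_le_one φbar
    have hDbar : 0 < Dbar := by
      have := aux_pos16 (β * mbar) (Real.cos φbar) (mul_pos hβ hmbar0) hcosbar1 hcbar
      rw [hDbardef]; nlinarith
    have hcosφφbar : Real.cos φbar ≤ Real.cos φ :=
      Real.cos_le_cos_of_nonneg_of_le_pi hφ0 (by linarith [Real.pi_pos]) hφ
    -- chain of inequalities on squares
    have step1 : (β * mbar) ^ 2 / ((β * mbar) ^ 2 - 2 * (β * mbar) * Real.cos φbar + 1)
        ≤ (β * mbar) ^ 2 / ((β * mbar) ^ 2 - 2 * (β * mbar) * Real.cos φ + 1) :=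
      mono_c16 (β * mbar) (Real.cos φ) (Real.cos φbar) (mul_pos hβ hmbar0) hcosφ1
        hcosφφbar hcbar
    have step2 : (β * mbar) ^ 2 / ((β * mbar) ^ 2 - 2 * (β * mbar) * Real.cos φ + 1)
        ≤ (β * m) ^ 2 / ((β * m) ^ 2 - 2 * (β * m) * Real.cos φ + 1) :=
      mono_m16 (Real.cos φ) (β * m) (β * mbar) hcosφ1 (mul_pos hβ hm)
        (mul_le_mul_of_nonneg_left hmbar hβ.le) hc
    have hsq : (β * mbar / Real.sqrt Dbar) ^ 2 ≤ A ^ 2 := by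
      rw [div_pow, Real.sq_sqrt hDbar.le, hA2]
      calc (β * mbar) ^ 2 / Dbar
          = (β * mbar) ^ 2 / ((β * mbar) ^ 2 - 2 * (β * mbar) * Real.cos φbar + 1) := by
            rw [hDbardef]; ring
        _ ≤ (β * m) ^ 2 / ((β * m) ^ 2 - 2 * (β * m) * Real.cos φ + 1) :=
            le_trans step1 step2
        _ = β ^ 2 * m ^ 2 / D := by rw [hDdef]; ring
    exact le_of_pow_le_pow_left₀ two_ne_zero hA0 hsq
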